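/- For integers n ≥ m ≥ 0, S(n,m) = \sum_{k=0}^{n-m} (-1)^k \binom{n-1+k}{n-m+k} \binom{2n-m}{n-m-k} s(n-m+k, k), where s denotes signed Stirling numbers of the first kind and S denotes Stirling numbers of the second kind. -/

import Mathlib

/-- Signed Stirling numbers of the first kind. -/
def s1 : ℕ → ℕ → ℤ
  | 0, 0 => 1
  | 0, _ + 1 => 0
  | _ + 1, 0 => 0
  | n + 1, m + 1 => s1 n m - n * s1 n (m + 1)

/-- Stirling numbers of the second kind. -/
def s2 : ℕ → ℕ → ℤ
  | 0, 0 => 1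
  | 0, _ + 1 => 0
  | _ + 1, 0 => 0
  | n + 1, m + 1 => (m + 1) * s2 n (m + 1) + s2 n m

open Finset

/-! ### Basic facts about `s1` and `s2` -/

lemma s1_zero_of_lt : ∀ n m : ℕ, n < m → s1 n m = 0 := by
  intro n
  induction n with
  | zero => intro m hm; obtain ⟨m, rfl⟩ : ∃ k, m = k + 1 := ⟨m - 1, by omega⟩; rfl
  | succ n ih =>
    intro m hm
    obtain ⟨m, rfl⟩ : ∃ k, m = k + 1 := ⟨m - 1, by omega⟩
    show s1 n m - (n : ℤ) * s1 n (m + 1) = 0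
    rw [ih m (by omega), ih (m + 1) (by omega)]
    ring

lemma s1_diag : ∀ n, s1 n n = 1 := by
  intro n
  induction n with
  | zero => rfl
  | succ n ih =>
    show s1 n n - (n : ℤ) * s1 n (n + 1) = 1
    rw [ih, s1_zero_of_lt n (n + 1) (by omega)]
    ring

lemma s2_zero_of_lt : ∀ n m : ℕ, n < m → s2 n m = 0 := by
  intro n
  induction n with
  | zero => intro m hm; obtain ⟨m, rfl⟩ : ∃ k, m = k + 1 := ⟨m - 1, by omega⟩; rfl
  | succ n ih =>
    intro m hm
    obtain ⟨m, rfl⟩ : ∃ k, m = k + 1 := ⟨m - 1, by omega⟩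
    show ((m : ℤ) + 1) * s2 n (m + 1) + s2 n m = 0
    rw [ih m (by omega), ih (m + 1) (by omega)]
    ring

lemma s2_diag : ∀ n, s2 n n = 1 := by
  intro n
  induction n with
  | zero => rfl
  | succ n ih =>
    show ((n : ℤ) + 1) * s2 n (n + 1) + s2 n n = 1
    rw [ih, s2_zero_of_lt n (n + 1) (by omega)]
    ring

/-! ### Finite-difference machinery on `ℤ → ℚ` -/

/-- Forward difference operator. -/
def dlt (f : ℤ → ℚ) : ℤ → ℚ := fun x => f (x + 1) - f x

/-- `PP N f` says the `(N+1)`-st finite difference of `f` vanishes,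
i.e. `f` behaves like a polynomial of degree at most `N`. -/
def PP (N : ℕ) (f : ℤ → ℚ) : Prop := ∀ x, dlt^[N + 1] f x = 0

lemma dlt_congr {f g : ℤ → ℚ} (h : ∀ x, f x = g x) : ∀ x, dlt f x = dlt g x := by
  intro x; simp only [dlt, h]

lemma it_congr {f g : ℤ → ℚ} (h : ∀ x, f x = g x) :
    ∀ (k : ℕ) (x : ℤ), dlt^[k] f x = dlt^[k] g x := by
  have : f = g := funext h
  subst this
  intro k x; rfl

lemma it_add : ∀ (k : ℕ) (f g : ℤ → ℚ) (x : ℤ),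
    dlt^[k] (fun y => f y + g y) x = dlt^[k] f x + dlt^[k] g x := by
  intro k
  induction k with
  | zero => intro f g x; rfl
  | succ k ih =>
    intro f g x
    rw [Function.iterate_succ_apply, Function.iterate_succ_apply,
      Function.iterate_succ_apply]
    rw [it_congr (f := dlt fun y => f y + g y) (g := fun y => dlt f y + dlt g y)
      (by intro y; simp only [dlt]; ring) k x]
    exact ih _ _ x

lemma it_const_mul : ∀ (k : ℕ) (c : ℚ) (f : ℤ → ℚ) (x : ℤ),
    dlt^[k] (fun y => c * f y) x = c * dlt^[k] f x := by
  intro k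
  induction k with
  | zero => intro c f x; rfl
  | succ k ih =>
    intro c f x
    rw [Function.iterate_succ_apply, Function.iterate_succ_apply]
    rw [it_congr (f := dlt fun y => c * f y) (g := fun y => c * dlt f y)
      (by intro y; simp only [dlt]; ring) k x]
    exact ih _ _ x

lemma PP_congr {N : ℕ} {f g : ℤ → ℚ} (h : ∀ x, f x = g x) (hf : PP N f) : PP N g := by
  intro x; rw [← it_congr h]; exact hf x

lemma PP_add {N : ℕ} {f g : ℤ → ℚ} (hf : PP N f) (hg : PP N g) :
    PP N (fun x => f x + g x) := by
  intro x; rw [it_add]; rw [hf x, hg x]; ring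

lemma PP_const_mul {N : ℕ} (c : ℚ) {f : ℤ → ℚ} (hf : PP N f) :
    PP N (fun x => c * f x) := by
  intro x; rw [it_const_mul, hf x]; ring

lemma PP_zero {N : ℕ} : PP N (fun _ => 0) := by
  have h : ∀ k (x : ℤ), dlt^[k] (fun _ => (0 : ℚ)) x = 0 := by
    intro k
    induction k with
    | zero => intro x; rfl
    | succ k ih =>
      intro x
      rw [Function.iterate_succ_apply]
      rw [it_congr (f := dlt fun _ => (0:ℚ)) (g := fun _ => (0:ℚ))
        (by intro y; simp [dlt]) k x]
      exact ih x
  intro x; exact h _ x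

lemma PP_mono {N : ℕ} {f : ℤ → ℚ} (hf : PP N f) : PP (N + 1) f := by
  intro x
  rw [Function.iterate_succ_apply']
  show dlt (dlt^[N+1] f) x = 0
  simp only [dlt, hf _]
  ring

lemma PP_dlt {N : ℕ} {f : ℤ → ℚ} (hf : PP (N + 1) f) : PP N (dlt f) := by
  intro x
  rw [← Function.iterate_succ_apply]
  exact hf x

lemma PP_of_dlt {N : ℕ} {f g : ℤ → ℚ} (h : ∀ x, dlt f x = g x) (hg : PP N g) :
    PP (N + 1) f := by
  intro x
  rw [Function.iterate_succ_apply]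
  rw [it_congr h]
  exact hg x

lemma PP_linmul : ∀ (N : ℕ) (c : ℚ) (f : ℤ → ℚ), PP N f →
    PP (N + 1) (fun x => ((x : ℚ) + c) * f x) := by
  intro N
  induction N with
  | zero =>
    intro c f hf
    have hc : ∀ x : ℤ, f (x + 1) = f x := by
      intro x
      have h1 : dlt f x = 0 := by have := hf x; simpa using this
      have h2 : f (x + 1) - f x = 0 := h1
      linarith
    apply PP_of_dlt (g := f) _ hf
    intro x
    simp only [dlt, hc x]
    push_cast
    ring
  | succ N ih =>
    intro c f hf
    apply PP_of_dlt (g := fun y => ((y : ℚ) + (c + 1)) * dlt f y + f y)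
    · intro x
      simp only [dlt]
      push_cast
      ring
    · exact PP_add (ih (c + 1) (dlt f) (PP_dlt hf)) hf

lemma PP_prodlin (s : Finset ℕ) (c : ℕ → ℚ) :
    PP s.card (fun x => ∏ i ∈ s, ((x : ℚ) + c i)) := by
  induction s using Finset.cons_induction with
  | empty =>
    intro x
    simp only [Finset.card_empty, Finset.prod_empty, zero_add, Function.iterate_one]
    show (1 : ℚ) - 1 = 0
    ring
  | cons a s ha ih =>
    rw [Finset.card_cons]
    apply PP_congr (f := fun x => ((x : ℚ) + c a) * ∏ i ∈ s, ((x : ℚ) + c i))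
    · intro x; rw [Finset.prod_cons]
    · exact PP_linmul _ _ _ ih

lemma PP_sum {N : ℕ} (s : Finset ℕ) (F : ℕ → ℤ → ℚ) (h : ∀ i ∈ s, PP N (F i)) :
    PP N (fun x => ∑ i ∈ s, F i x) := by
  induction s using Finset.cons_induction with
  | empty => exact PP_congr (f := fun _ => 0) (by intro x; simp) PP_zero
  | cons a s ha ih =>
    apply PP_congr (f := fun x => F a x + ∑ i ∈ s, F i x)
    · intro x; rw [Finset.sum_cons]
    · exact PP_add (h a (Finset.mem_cons_self a s))
        (ih fun i hi => h i (Finset.mem_cons_of_mem hi))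

lemma eq_const_of_dlt_zero {f : ℤ → ℚ} (hf : ∀ x, dlt f x = 0) : ∀ x, f x = f 0 := by
  have step : ∀ x : ℤ, f (x + 1) = f x := by
    intro x
    have := hf x
    have : f (x + 1) - f x = 0 := this
    linarith
  intro x
  induction x using Int.induction_on with
  | zero => rfl
  | succ k ih => rw [step k]; exact ih
  | pred k ih => have := step (-(k:ℤ) - 1); simp only [sub_add_cancel] at this; rw [← this]; exact ih

lemma PP_unique : ∀ (N : ℕ) (f : ℤ → ℚ), PP N f → (∀ i : ℕ, i ≤ N → f (i : ℤ) = 0) →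
    ∀ x, f x = 0 := by
  intro N
  induction N with
  | zero =>
    intro f hf h0 x
    have hd : ∀ x, dlt f x = 0 := by
      intro x
      have := hf x
      simpa using this
    rw [eq_const_of_dlt_zero hd x]
    exact_mod_cast h0 0 le_rfl
  | succ N ih =>
    intro f hf h0 x
    have hd : ∀ x, dlt f x = 0 := by
      apply ih (dlt f) (PP_dlt hf)
      intro i hi
      show f ((i : ℤ) + 1) - f i = 0
      have h1 : f ((i : ℤ) + 1) = 0 := by
        have := h0 (i + 1) (by omega)
        push_cast at this
        exact this
      rw [h1, h0 i (by omega)]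
      ring
    rw [eq_const_of_dlt_zero hd x]
    exact_mod_cast h0 0 (by omega)

/-! ### The polynomial extension `gg d` of `n ↦ s1 n (n - d)` -/

def gg : ℕ → ℤ → ℚ
  | 0 => fun _ => 1
  | d + 1 => fun x =>
      if 0 ≤ x then -(∑ i ∈ range x.toNat, (i : ℚ) * gg d (i : ℤ))
      else ∑ i ∈ range (-x).toNat, ((x + i : ℤ) : ℚ) * gg d (x + i)

lemma gg_zero_eval (x : ℤ) : gg 0 x = 1 := rfl

lemma gg_succ_zero (d : ℕ) : gg (d + 1) 0 = 0 := by
  show (if 0 ≤ (0:ℤ) then -(∑ i ∈ range (0:ℤ).toNat, (i : ℚ) * gg d (i : ℤ))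
      else ∑ i ∈ range (-(0:ℤ)).toNat, (((0:ℤ) + i : ℤ) : ℚ) * gg d ((0:ℤ) + i)) = 0
  rw [if_pos le_rfl]
  simp

lemma gg_rec (d : ℕ) (x : ℤ) : gg (d + 1) (x + 1) = gg (d + 1) x - x * gg d x := by
  show (if 0 ≤ x + 1 then -(∑ i ∈ range (x+1).toNat, (i : ℚ) * gg d (i : ℤ))
      else ∑ i ∈ range (-(x+1)).toNat, ((x + 1 + i : ℤ) : ℚ) * gg d (x + 1 + i))
    = (if 0 ≤ x then -(∑ i ∈ range x.toNat, (i : ℚ) * gg d (i : ℤ))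
      else ∑ i ∈ range (-x).toNat, ((x + i : ℤ) : ℚ) * gg d (x + i)) - x * gg d x
  rcases le_or_gt 0 x with hx | hx
  · rw [if_pos (by omega), if_pos hx]
    have ht : (x + 1).toNat = x.toNat + 1 := by omega
    rw [ht, Finset.sum_range_succ]
    have hc : ((x.toNat : ℕ) : ℤ) = x := Int.toNat_of_nonneg hx
    have hc2 : ((x.toNat : ℕ) : ℚ) = (x : ℚ) := by exact_mod_cast congrArg (Int.cast : ℤ → ℚ) hc
    rw [hc, hc2]
    ring
  · rcases eq_or_lt_of_le (by omega : x + 1 ≤ 0) with heq | hlt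
    · -- x = -1
      have hx1 : x = -1 := by omega
      subst hx1
      rw [if_pos (by norm_num), if_neg (by norm_num)]
      norm_num
    · rw [if_neg (by omega), if_neg (by omega)]
      have ht : (-x).toNat = (-(x+1)).toNat + 1 := by omega
      rw [ht, Finset.sum_range_succ']
      have hterm : ∀ i : ℕ,
          ((x + ((i + 1 : ℕ) : ℤ) : ℤ) : ℚ) * gg d (x + ((i + 1 : ℕ) : ℤ))
            = ((x + 1 + (i : ℤ) : ℤ) : ℚ) * gg d (x + 1 + (i : ℤ)) := by
        intro i
        rw [show x + ((i + 1 : ℕ) : ℤ) = x + 1 + (i : ℤ) by push_cast; ring]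
      rw [Finset.sum_congr rfl fun i _ => hterm i]
      have h0 : ((x + ((0 : ℕ) : ℤ) : ℤ) : ℚ) * gg d (x + ((0 : ℕ) : ℤ))
          = (x : ℚ) * gg d x := by
        rw [show x + ((0 : ℕ) : ℤ) = x by push_cast; ring]
      rw [h0]
      ring

lemma gg_vanish : ∀ (d : ℕ) (i : ℕ), i ≤ d + 1 → gg (d + 1) (i : ℤ) = 0 := by
  intro d
  induction d with
  | zero =>
    intro i hi
    interval_cases i
    · exact gg_succ_zero 0
    · have h := gg_rec 0 0
      rw [gg_succ_zero 0] at h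
      simpa using h
  | succ d ih =>
    intro i hi
    induction i with
    | zero => exact gg_succ_zero (d + 1)
    | succ i ihi =>
      have h := gg_rec (d + 1) (i : ℤ)
      have h2 : gg (d + 1 + 1) (i : ℤ) = 0 := ihi (by omega)
      have h3 : gg (d + 1) (i : ℤ) = 0 := ih i (by omega)
      rw [show ((i + 1 : ℕ) : ℤ) = (i : ℤ) + 1 by push_cast; ring, h, h2, h3]
      ring

lemma gg_val : ∀ (d t : ℕ), gg d ((d + t : ℕ) : ℤ) = (s1 (d + t) t : ℚ) := by
  intro d
  induction d with
  | zero =>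
    intro t
    rw [gg_zero_eval]
    rw [show (0 + t) = t by omega, s1_diag]
    norm_num
  | succ d ih =>
    intro t
    induction t with
    | zero =>
      rw [gg_vanish d (d + 1 + 0) (by omega)]
      rw [show d + 1 + 0 = d + 1 by omega]
      rw [show s1 (d+1) 0 = 0 from rfl]
      norm_num
    | succ t iht =>
      have h := gg_rec d ((d + 1 + t : ℕ) : ℤ)
      have harg : ((d + 1 + (t+1) : ℕ) : ℤ) = ((d + 1 + t : ℕ) : ℤ) + 1 := by push_cast; ring
      rw [harg, h, iht]
      have harg2 : ((d + 1 + t : ℕ) : ℤ) = ((d + (t+1) : ℕ) : ℤ) := by push_cast; ring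
      rw [harg2, ih (t+1)]
      have hs : s1 (d + 1 + (t+1)) (t+1) = s1 (d+1+t) t - (d+1+t : ℤ) * s1 (d+1+t) (t+1) := by
        rw [show d + 1 + (t+1) = (d+1+t) + 1 by omega]
        rfl
      rw [hs]
      rw [show d + (t+1) = d + 1 + t by omega]
      push_cast
      ring

lemma s2_gg : ∀ (d t : ℕ), (s2 (d + t) t : ℚ) = (-1) ^ d * gg d (-(t : ℤ)) := by
  intro d
  induction d with
  | zero =>
    intro t
    rw [show (0 + t) = t by omega, s2_diag, gg_zero_eval]
    norm_num
  | succ d ih =>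
    intro t
    induction t with
    | zero =>
      rw [show ((0:ℕ) : ℤ) = 0 by norm_num, neg_zero, gg_succ_zero d]
      rw [show d + 1 + 0 = d + 1 by omega]
      rw [show s2 (d+1) 0 = 0 from rfl]
      norm_num
    | succ t iht =>
      have hs : s2 (d + 1 + (t+1)) (t+1)
          = ((t:ℤ) + 1) * s2 (d+1+t) (t+1) + s2 (d+1+t) t := by
        rw [show d + 1 + (t+1) = (d+1+t) + 1 by omega]
        show s2 ((d+1+t)+1) (t+1) = _
        rfl
      have hmid : (s2 (d+1+t) (t+1) : ℚ) = (-1) ^ d * gg d (-((t:ℤ)+1)) := by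
        have := ih (t+1)
        rw [show d + (t+1) = d + 1 + t by omega] at this
        rw [this]
        push_cast
        ring_nf
      have hr := gg_rec d (-((t:ℤ)+1))
      rw [show -((t:ℤ)+1) + 1 = -(t:ℤ) by ring] at hr
      have hcast : (s2 (d + 1 + (t+1)) (t+1) : ℚ)
          = ((t:ℚ) + 1) * (s2 (d+1+t) (t+1) : ℚ) + (s2 (d+1+t) t : ℚ) := by
        rw [hs]; push_cast; ring
      push_cast at hr hcast hmid iht ⊢
      linear_combination hcast + ((t:ℚ) + 1) * hmid + iht + ((-1:ℚ)) ^ (d+1) * hr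

lemma gg_PP : ∀ d, PP (2 * d) (gg d) := by
  intro d
  induction d with
  | zero =>
    intro x
    simp only [zero_add, Function.iterate_one, Nat.mul_zero]
    show gg 0 (x + 1) - gg 0 x = 0
    rw [gg_zero_eval, gg_zero_eval]
    ring
  | succ d ih =>
    have h1 : PP (2 * d + 1) (fun x => ((x:ℚ) + 0) * (-1 * gg d x)) :=
      PP_linmul _ _ _ (PP_const_mul (-1) ih)
    have h2 : PP (2 * d + 1) (dlt (gg (d+1))) := by
      apply PP_congr (f := fun x => ((x:ℚ) + 0) * (-1 * gg d x)) _ h1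
      intro x
      show ((x:ℚ) + 0) * (-1 * gg d x) = gg (d+1) (x+1) - gg (d+1) x
      rw [gg_rec d x]
      ring
    have h3 : PP (2 * d + 1 + 1) (gg (d+1)) := by
      intro x
      rw [Function.iterate_succ_apply]
      exact h2 x
    rw [show 2 * (d + 1) = 2 * d + 1 + 1 by ring]
    exact h3

/-! ### Product / binomial identities -/

lemma prod_erase_range {M : Type*} [CommMonoid M] (f : ℕ → M) (a N : ℕ) (h : a < N) :
    ∏ i ∈ (range N).erase a, f i
      = (∏ i ∈ range a, f i) * ∏ i ∈ range (N - (a + 1)), f (a + 1 + i) := by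
  have hset : (range N).erase a = range a ∪ Ico (a+1) N := by
    ext k
    simp only [Finset.mem_erase, Finset.mem_range, Finset.mem_union, Finset.mem_Ico]
    omega
  rw [hset, Finset.prod_union (by
    rw [Finset.disjoint_left]
    intro k hk hk2
    simp only [Finset.mem_range] at hk
    simp only [Finset.mem_Ico] at hk2
    omega)]
  congr 1
  rw [Finset.prod_Ico_eq_prod_range]

lemma asc_prod : ∀ (t q : ℕ), (t + q).choose (q + 1) * Nat.factorial (q + 1) = ∏ i ∈ range (q + 1), (t + i) := by
  intro t q
  induction q with
  | zero => simp [Nat.choose_one_right]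
  | succ q ih =>
    rw [Finset.prod_range_succ, ← ih]
    have key : (t + (q+1)).choose (q + 2) * (q + 2) = (t + q).choose (q + 1) * (t + q + 1) := by
      have h := Nat.add_one_mul_choose_eq (t + q) (q + 1)
      rw [show t + (q+1) = t + q + 1 by omega, ← h]
      ring
    calc (t + (q+1)).choose (q+2) * Nat.factorial (q+2) 
        = ((t + (q+1)).choose (q+2) * (q+2)) * Nat.factorial (q+1) := by
          rw [Nat.factorial_succ (q+1)]; ring
      _ = ((t + q).choose (q+1) * (t + q + 1)) * Nat.factorial (q+1) := by rw [key]
      _ = (t + q).choose (q+1) * Nat.factorial (q+1) * (t + (q+1)) := by ring_nf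
  
lemma asc_prod2 : ∀ (a b : ℕ), (a + b).choose b * Nat.factorial b = ∏ i ∈ range b, (a + 1 + i) := by
  intro a b
  induction b with
  | zero => simp
  | succ b ih =>
    rw [Finset.prod_range_succ, ← ih]
    have key : (a + (b+1)).choose (b + 1) * (b + 1) = (a + b).choose b * (a + b + 1) := by
      have h := Nat.add_one_mul_choose_eq (a + b) b
      rw [show a + (b+1) = a + b + 1 by omega, ← h]
      ring
    calc (a + (b+1)).choose (b+1) * Nat.factorial (b+1)
        = ((a + (b+1)).choose (b+1) * (b+1)) * Nat.factorial b := by rw [Nat.factorial_succ b]; ring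
      _ = ((a + b).choose b * (a + b + 1)) * Nat.factorial b := by rw [key]
      _ = (a + b).choose b * Nat.factorial b * (a + 1 + b) := by ring_nf

/-- The key pure-`ℕ` product identity. Here `d = D + 1 ≥ 1`. -/
lemma NB (D j t : ℕ) (hj : j ≤ D + 1) :
    ∏ i ∈ (range (2 * (D+1) + 1)).erase ((D+1) + j), (t + i)
      = ((D + t + j).choose (D + 1 + j) * Nat.factorial (D + 1 + j))
        * ((2 * (D+1) + t).choose ((D+1) - j) * Nat.factorial ((D+1) - j)) := by
  set d := D + 1 with hd
  rw [prod_erase_range (fun i => t + i) (d + j) (2 * d + 1) (by omega)]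
  have h1 : ∏ i ∈ range (d + j), (t + i) = (D + t + j).choose (D + 1 + j) * Nat.factorial (D + 1 + j) := by
    rw [show d + j = D + j + 1 by omega, show D + t + j = t + (D + j) by omega]
    exact (asc_prod t (D + j)).symm
  have h2 : ∏ i ∈ range (2 * d + 1 - (d + j + 1)), (t + (d + j + 1 + i))
      = (2 * d + t).choose (d - j) * Nat.factorial (d - j) := by
    rw [show 2 * d + 1 - (d + j + 1) = d - j by omega]
    have hasc := asc_prod2 (d + j + t) (d - j)
    rw [show d + j + t + (d - j) = 2 * d + t by omega] at hasc
    rw [hasc]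
    exact Finset.prod_congr rfl (fun i _ => by omega)
  rw [h1, h2]

/-! ### The Lagrange basis functions -/

def ecore (d j : ℕ) : ℤ → ℚ := fun x => ∏ i ∈ (range (2*d+1)).erase (d+j), ((x : ℚ) - (i : ℕ))

lemma ecore_PP (d j : ℕ) (hj : j ≤ d) : PP (2 * d) (ecore d j) := by
  have hcard : ((range (2*d+1)).erase (d+j)).card = 2 * d := by
    rw [Finset.card_erase_of_mem (by simp only [Finset.mem_range]; omega)]
    simp
  have := PP_prodlin ((range (2*d+1)).erase (d+j)) (fun i => -(i : ℚ))
  rw [hcard] at this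
  apply PP_congr _ this
  intro x
  apply Finset.prod_congr rfl
  intro i _
  ring

lemma ecore_root (d j : ℕ) (i0 : ℕ) (h0 : i0 < d) (hj : j ≤ d) :
    ecore d j ((i0 : ℕ) : ℤ) = 0 := by
  apply Finset.prod_eq_zero (i := i0)
  · simp only [Finset.mem_erase, Finset.mem_range]
    omega
  · push_cast
    ring

lemma ecore_off (d j k : ℕ) (hk : k ≤ d) (hne : k ≠ j) :
    ecore d j ((d + k : ℕ) : ℤ) = 0 := by
  apply Finset.prod_eq_zero (i := d + k)
  · simp only [Finset.mem_erase, Finset.mem_range]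
    omega
  · push_cast
    ring

lemma prod_neg_fact : ∀ r : ℕ, ∏ i ∈ range r, (-(1 + (i:ℚ))) = (-1) ^ r * Nat.factorial r := by
  intro r
  induction r with
  | zero => simp
  | succ r ih =>
    rw [Finset.prod_range_succ, ih, Nat.factorial_succ]
    push_cast
    ring

lemma prod_fact_q : ∀ q : ℕ, ∏ i ∈ range q, ((q : ℚ) - (i:ℕ)) = Nat.factorial q := by
  intro q
  have hn : ∏ i ∈ range q, (q - i) = Nat.factorial q := by
    rw [← Nat.descFactorial_eq_prod_range]
    exact Nat.descFactorial_self q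
  calc ∏ i ∈ range q, ((q : ℚ) - (i:ℕ)) = ∏ i ∈ range q, (((q - i : ℕ) : ℚ)) := by
        apply Finset.prod_congr rfl
        intro i hi
        simp only [Finset.mem_range] at hi
        rw [Nat.cast_sub (by omega)]
    _ = (((∏ i ∈ range q, (q - i) : ℕ)) : ℚ) := by push_cast; rfl
    _ = (Nat.factorial q : ℚ) := by rw [hn]

lemma ecore_diag (d j : ℕ) (hj : j ≤ d) :
    ecore d j ((d + j : ℕ) : ℤ) = (-1) ^ (d - j) * (Nat.factorial (d + j) : ℚ) * (Nat.factorial (d - j) : ℚ) := by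
  unfold ecore
  rw [prod_erase_range (fun i => (((d + j : ℕ) : ℤ) : ℚ) - (i : ℕ)) (d + j) (2*d+1) (by omega)]
  have h1 : ∏ i ∈ range (d + j), ((((d + j : ℕ) : ℤ) : ℚ) - (i:ℕ)) = (Nat.factorial (d+j) : ℚ) := by
    rw [← prod_fact_q (d + j)]
    apply Finset.prod_congr rfl
    intro i _
    push_cast
    ring
  have h2 : ∏ i ∈ range (2*d+1 - (d+j+1)), ((((d + j : ℕ) : ℤ) : ℚ) - ((d + j + 1 + i : ℕ))) 
      = (-1) ^ (d - j) * (Nat.factorial (d - j) : ℚ) := by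
    rw [show 2*d+1 - (d+j+1) = d - j by omega]
    rw [← prod_neg_fact (d - j)]
    apply Finset.prod_congr rfl
    intro i _
    push_cast
    ring
  rw [h1, h2]
  ring

lemma ecore_neg (D j : ℕ) (hj : j ≤ D + 1) (t : ℕ) :
    ecore (D+1) j (-(t : ℤ))
      = (((D + t + j).choose (D + 1 + j) * Nat.factorial (D + 1 + j)
          * ((2 * (D+1) + t).choose ((D+1) - j) * Nat.factorial ((D+1) - j)) : ℕ) : ℚ) := by
  unfold ecore
  set d := D + 1 with hd
  have hcard : ((range (2*d+1)).erase (d+j)).card = 2 * d := by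
    rw [Finset.card_erase_of_mem (by simp only [Finset.mem_range]; omega)]
    simp
  calc ∏ i ∈ (range (2*d+1)).erase (d+j), (((-(t:ℤ)) : ℚ) - (i:ℕ))
      = ∏ i ∈ (range (2*d+1)).erase (d+j), ((-1) * (((t + i : ℕ) : ℚ))) := by
        apply Finset.prod_congr rfl
        intro i _
        push_cast
        ring
    _ = (-1)^(2*d) * ∏ i ∈ (range (2*d+1)).erase (d+j), (((t + i : ℕ) : ℚ)) := by
        rw [Finset.prod_mul_distrib, Finset.prod_const, hcard]
    _ = ∏ i ∈ (range (2*d+1)).erase (d+j), (((t + i : ℕ) : ℚ)) := by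
        rw [show (2*d) = 2*d by rfl]
        rw [pow_mul]
        norm_num
    _ = (((∏ i ∈ (range (2*d+1)).erase (d+j), (t + i) : ℕ)) : ℚ) := by push_cast; rfl
    _ = _ := by rw [NB D j t hj]

/-! ### Main assembly -/

lemma main_identity (D t : ℕ) :
    (s2 (D + 1 + t) t : ℚ)
      = ∑ j ∈ range (D + 2), (-1 : ℚ) ^ j * ((D + t + j).choose (D + 1 + j))
          * ((2 * (D + 1) + t).choose (D + 1 - j)) * (s1 (D + 1 + j) j : ℚ) := by
  set d := D + 1 with hd
  -- denominators
  set Dq : ℕ → ℚ := fun j => (-1) ^ (d - j) * (Nat.factorial (d + j) : ℚ) * (Nat.factorial (d - j) : ℚ) with hDq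
  have hDq_ne : ∀ j, Dq j ≠ 0 := by
    intro j
    simp only [hDq]
    positivity
  -- basis functions
  set E : ℕ → ℤ → ℚ := fun j x => ecore d j x * (Dq j)⁻¹ with hE
  -- the function h
  set h : ℤ → ℚ := fun x => gg d x - ∑ j ∈ range (d + 1), gg d ((d + j : ℕ) : ℤ) * E j x with hh
  have hPP : PP (2 * d) h := by
    have hsum : PP (2 * d) (fun x => ∑ j ∈ range (d + 1), gg d ((d + j : ℕ) : ℤ) * E j x) := by
      apply PP_sum
      intro j hj
      simp only [Finset.mem_range] at hj
      apply PP_congr (f := fun x => (gg d ((d + j : ℕ) : ℤ) * (Dq j)⁻¹) * ecore d j x)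
      · intro x; simp only [hE]; ring
      · exact PP_const_mul _ (ecore_PP d j (by omega))
    apply PP_congr
      (f := fun x => gg d x + (-1) * (∑ j ∈ range (d + 1), gg d ((d + j : ℕ) : ℤ) * E j x))
    · intro x; simp only [hh]; ring
    · exact PP_add (gg_PP d) (PP_const_mul _ hsum)
  have hzeros : ∀ i : ℕ, i ≤ 2 * d → h (i : ℤ) = 0 := by
    intro i hi
    rcases lt_or_ge i d with hid | hid
    · -- i < d : everything vanishes
      simp only [hh]
      rw [gg_vanish D i (by omega)]
      rw [Finset.sum_eq_zero]
      · ring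
      · intro j hj
        simp only [Finset.mem_range] at hj
        simp only [hE]
        rw [ecore_root d j i hid (by omega)]
        ring
    · -- i = d + k
      obtain ⟨k, rfl⟩ : ∃ k, i = d + k := ⟨i - d, by omega⟩
      have hk : k ≤ d := by omega
      simp only [hh]
      rw [Finset.sum_eq_single k]
      · simp only [hE]
        rw [ecore_diag d k hk]
        rw [show ((-1:ℚ) ^ (d - k) * (Nat.factorial (d + k) : ℚ) * (Nat.factorial (d - k) : ℚ)) = Dq k from rfl]
        rw [mul_inv_cancel₀ (hDq_ne k)]
        ring
      · intro j hj hne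
        simp only [Finset.mem_range] at hj
        simp only [hE]
        rw [ecore_off d j k hk (fun hkj => hne hkj.symm)]
        ring
      · intro hk2
        simp only [Finset.mem_range] at hk2
        omega
  have hzero : ∀ x, h x = 0 := PP_unique (2 * d) h hPP hzeros
  have hval := hzero (-(t : ℤ))
  simp only [hh, sub_eq_zero] at hval
  -- hval : gg d (-t) = ∑ j, gg d (d+j) * E j (-t)
  have hfinal : (s2 (d + t) t : ℚ) = (-1:ℚ) ^ d * gg d (-(t : ℤ)) := s2_gg d t
  rw [hfinal, hval, Finset.mul_sum]
  apply Finset.sum_congr rfl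
  intro j hj
  simp only [Finset.mem_range] at hj
  have hjd : j ≤ d := by omega
  rw [gg_val d j]
  simp only [hE]
  have hen := ecore_neg D j (by omega) t
  rw [← hd] at hen
  rw [hen, hDq]
  have hpow : ((-1:ℚ)) ^ (d - j) * (-1:ℚ) ^ j = (-1:ℚ) ^ d := by
    rw [← pow_add]
    congr 1
    omega
  have hF1 : ((Nat.factorial (d+j) : ℕ) : ℚ) ≠ 0 := Nat.cast_ne_zero.mpr (Nat.factorial_ne_zero _)
  have hF2 : ((Nat.factorial (d-j) : ℕ) : ℚ) ≠ 0 := Nat.cast_ne_zero.mpr (Nat.factorial_ne_zero _)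
  have hm1 : ((-1:ℚ)) ^ (d - j) ≠ 0 := pow_ne_zero _ (by norm_num)
  push_cast
  field_simp
  linear_combination (-((D + t + j).choose (d + j) : ℚ) * ((2 * d + t).choose (d - j) : ℚ)
    * ((s1 (d+j) j : ℤ) : ℚ)) * hpow

theorem stmt13 (n m : ℕ) (h : m ≤ n) :
    s2 n m = ∑ k ∈ Finset.range (n - m + 1),
      (-1 : ℤ) ^ k * (n - 1 + k).choose (n - m + k) * (2 * n - m).choose (n - m - k)
        * s1 (n - m + k) k := by
  rcases eq_or_lt_of_le h with heq | hlt
  · subst heq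
    rw [Nat.sub_self]
    rw [Finset.sum_range_one]
    rw [show 2 * m - m = m by omega]
    simp only [pow_zero, Nat.add_zero, Nat.choose_zero_right, Nat.sub_zero]
    rw [s2_diag]
    rw [show s1 0 0 = 1 from rfl]
    ring
  · obtain ⟨D, rfl⟩ : ∃ D, n = D + 1 + m := ⟨n - m - 1, by omega⟩
    rw [show D + 1 + m - m + 1 = D + 2 by omega]
    have hsum : ∑ k ∈ Finset.range (D + 2),
        (-1 : ℤ) ^ k * (D + 1 + m - 1 + k).choose (D + 1 + m - m + k)
          * (2 * (D + 1 + m) - m).choose (D + 1 + m - m - k) * s1 (D + 1 + m - m + k) k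
      = ∑ k ∈ Finset.range (D + 2),
        (-1 : ℤ) ^ k * ((D + m + k).choose (D + 1 + k))
          * ((2 * (D + 1) + m).choose (D + 1 - k)) * s1 (D + 1 + k) k := by
      apply Finset.sum_congr rfl
      intro k hk
      rw [show D + 1 + m - 1 + k = D + m + k by omega,
        show D + 1 + m - m + k = D + 1 + k by omega,
        show 2 * (D + 1 + m) - m = 2 * (D + 1) + m by omega,
        show D + 1 + m - m - k = D + 1 - k by omega]
    rw [hsum]
    have h2 := main_identity D m
    exact_mod_cast h2
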